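/- There exist uncountably many functions ξ : ℕ × ℕ → {0,1} such that for every x, ξ(x, y+1) ≠ ξ(x, y) for all y, and for any two distinct such functions ξ₁ ≠ ξ₂ and any bijection φ : ℕ → ℕ×ℕ, setting f_i = ξ∘φ, the following holds: if f_{ξ₁}(i) < f_{ξ₂}(i) for some i, then there exists j > i with f_{ξ₂}(j) < f_{ξ₁}(j). -/

import Mathlib

theorem antichain_diagonal :
    ∃ S : Set (ℕ × ℕ → Bool),
      ¬S.Countable ∧
      (∀ ξ ∈ S, ∀ x y : ℕ, ξ (x, y + 1) ≠ ξ (x, y)) ∧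
      (∀ ξ₁ ∈ S, ∀ ξ₂ ∈ S, ξ₁ ≠ ξ₂ →
        ∀ φ : ℕ ≃ ℕ × ℕ, ∀ i : ℕ, ξ₁ (φ i) < ξ₂ (φ i) →
          ∃ j : ℕ, i < j ∧ ξ₂ (φ j) < ξ₁ (φ j)) := by
  set F : (ℕ → Bool) → (ℕ × ℕ → Bool) :=
    fun g p => xor (g p.1) (decide (p.2 % 2 = 1)) with hF
  have hinj : Function.Injective F := by
    intro g₁ g₂ hg
    funext x
    have := congrFun hg (x, 0)
    simpa [hF] using this
  refine ⟨Set.range F, ?_, ?_, ?_⟩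
  · intro h
    have h2 : (Set.univ : Set (ℕ → Bool)).Countable := by
      have := h.preimage hinj
      simpa using this
    rw [Set.countable_univ_iff] at h2
    obtain ⟨f, hf⟩ := exists_injective_nat (ℕ → Bool)
    set d : ℕ → Bool := fun n => ! (Function.invFun f n n) with hd
    have hli := congrFun (Function.leftInverse_invFun hf d) (f d)
    have hcontra : d (f d) = ! d (f d) := by
      conv_lhs => rw [hd]
      simp [hli]
      exact hli
    simp at hcontra
  · rintro ξ ⟨g, rfl⟩ x y
    have : (y + 1) % 2 = 1 ↔ ¬ (y % 2 = 1) := by omega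
    simp only [hF]
    rcases Nat.mod_two_eq_zero_or_one y with h | h <;>
      cases g x <;> simp [h, Nat.add_mod]
  · rintro ξ₁ ⟨g₁, rfl⟩ ξ₂ ⟨g₂, rfl⟩ hne φ i hlt
    obtain ⟨h1, h2⟩ := Bool.lt_iff.mp hlt
    set x := (φ i).1 with hx
    set y := (φ i).2 with hy
    have key : ∀ k : ℕ, F g₂ (x, y + 2 * k + 1) < F g₁ (x, y + 2 * k + 1) := by
      intro k
      have hpar : ((y + 2 * k + 1) % 2 = 1) ↔ ¬ (y % 2 = 1) := by omega
      have h1' : F g₁ (x, y) = false := by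
        simpa [hx, hy] using h1
      have h2' : F g₂ (x, y) = true := by
        simpa [hx, hy] using h2
      simp only [hF] at h1' h2' ⊢
      rcases Nat.mod_two_eq_zero_or_one y with h | h <;>
        cases hg1 : g₁ x <;> cases hg2 : g₂ x <;>
          simp_all [Bool.lt_iff]
    have hT : {j : ℕ | F g₂ (φ j) < F g₁ (φ j)}.Infinite := by
      refine Set.infinite_of_injective_forall_mem
        (f := fun k : ℕ => φ.symm (x, y + 2 * k + 1)) (fun a b hab => ?_) (fun k => ?_)
      · have h' := φ.symm.injective hab
        have h'' : y + 2 * a + 1 = y + 2 * b + 1 := congrArg Prod.snd h'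
        omega
      · simp only [Set.mem_setOf_eq, Equiv.apply_symm_apply]
        exact key k
    obtain ⟨j, hjT, hij⟩ := hT.exists_gt i
    exact ⟨j, hij, hjT⟩
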